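/- Let Σ_δ be an m×m real positive definite matrix, A an n×n real matrix, C an m×n real matrix, and K a fixed n×m real matrix. Define Q^0 = 0 and Q^k = (I − K C) A Q^{k-1} Aᵀ (I − K C)ᵀ + K Σ_δ Kᵀ for k ≥ 1, and define M_0 = 0, M_1 = Q^1, and for k ≥ 2: M⁻_k = A M_{k-1} Aᵀ, M_k = M⁻_k − M⁻_k Cᵀ (C M⁻_k Cᵀ + Σ_δ)⁻¹ C M⁻_k. Suppose that Q^k converges entrywise to a matrix Q∞ and M_k converges entrywise to a matrix M∞ as k → ∞. Then Q∞ ⪰ M∞; moreover Q∞ satisfies the Lyapunov fixed-point equation Q∞ = (I − K C) A Q∞ Aᵀ (I − K C)ᵀ + K Σ_δ Kᵀ, and M∞ together with M⁻∞ := A M∞ Aᵀ satisfies M∞ = M⁻∞ − M⁻∞ Cᵀ (C M⁻∞ Cᵀ + Σ_δ)⁻¹ C M⁻∞. -/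

import Mathlib

open Matrix Filter

private lemma psd_conj {p q : ℕ} {P : Matrix (Fin q) (Fin q) ℝ} (hP : P.PosSemidef)
    (B : Matrix (Fin p) (Fin q) ℝ) : (B * P * Bᵀ).PosSemidef := by
  simpa [conjTranspose_eq_transpose_of_trivial] using hP.mul_mul_conjTranspose_same B

private lemma psd_symm {p : ℕ} {P : Matrix (Fin p) (Fin p) ℝ} (hP : P.PosSemidef) : Pᵀ = P := by
  exact (by simpa [conjTranspose_eq_transpose_of_trivial] using hP.isHermitian : P.IsSymm)

private lemma posSemidef_limit {p : ℕ} {f : ℕ → Matrix (Fin p) (Fin p) ℝ}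
    {L : Matrix (Fin p) (Fin p) ℝ}
    (hf : ∀ k, (f k).PosSemidef) (hlim : Tendsto f atTop (nhds L)) : L.PosSemidef := by
  constructor
  · have h1 : Tendsto (fun k => (f k)ᴴ) atTop (nhds Lᴴ) :=
      ((continuous_id.matrix_conjTranspose).tendsto L).comp hlim
    have h2 : (fun k => (f k)ᴴ) = f := funext fun k => (hf k).isHermitian
    rw [h2] at h1
    exact tendsto_nhds_unique h1 hlim
  · intro x
    have hc : Continuous fun M : Matrix (Fin p) (Fin p) ℝ =>
        x.sum fun i xi => x.sum fun j xj => star xi * M i j * xj := by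
      unfold Finsupp.sum
      fun_prop
    exact ge_of_tendsto' ((hc.tendsto L).comp hlim) fun k => (hf k).2 x

private lemma contAt_inv' {p : ℕ} (S : Matrix (Fin p) (Fin p) ℝ)
    (h : S.det ≠ 0) : ContinuousAt (fun X : Matrix (Fin p) (Fin p) ℝ => X⁻¹) S := by
  apply continuousAt_matrix_inv
  simp only [Ring.inverse_eq_inv']
  exact continuousAt_inv₀ h

set_option maxHeartbeats 1000000 in
private lemma tendsto_matrix_mul {p q r : ℕ} {f : ℕ → Matrix (Fin p) (Fin q) ℝ}
    {g : ℕ → Matrix (Fin q) (Fin r) ℝ} {F : Matrix (Fin p) (Fin q) ℝ}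
    {G : Matrix (Fin q) (Fin r) ℝ}
    (hf : Tendsto f atTop (nhds F)) (hg : Tendsto g atTop (nhds G)) :
    Tendsto (fun k => f k * g k) atTop (nhds (F * G)) := by
  have hc : Continuous (fun z : Matrix (Fin p) (Fin q) ℝ × Matrix (Fin q) (Fin r) ℝ
      => z.1 * z.2) := Continuous.matrix_mul continuous_fst continuous_snd
  exact (hc.tendsto (F, G)).comp (hf.prodMk_nhds hg)

private lemma completing_square {n m : ℕ} (B : Matrix (Fin n) (Fin n) ℝ)
    (C : Matrix (Fin m) (Fin n) ℝ) (Sδ : Matrix (Fin m) (Fin m) ℝ)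
    (K : Matrix (Fin n) (Fin m) ℝ)
    (hB : Bᵀ = B) (hSδ : Sδᵀ = Sδ) (hU : IsUnit (C * B * Cᵀ + Sδ).det) :
    (1 - K * C) * B * (1 - K * C)ᵀ + K * Sδ * Kᵀ
      = (B - B * Cᵀ * (C * B * Cᵀ + Sδ)⁻¹ * C * B)
        + (K - B * Cᵀ * (C * B * Cᵀ + Sδ)⁻¹) * (C * B * Cᵀ + Sδ)
          * (K - B * Cᵀ * (C * B * Cᵀ + Sδ)⁻¹)ᵀ := by
  set S := C * B * Cᵀ + Sδ with hSdef
  have hSt : Sᵀ = S := by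
    rw [hSdef]; simp [transpose_add, transpose_mul, hB, hSδ, Matrix.mul_assoc]
  have h1 : S * S⁻¹ = 1 := Matrix.mul_nonsing_inv S hU
  have h2 : S⁻¹ * S = 1 := Matrix.nonsing_inv_mul S hU
  have hSi : S⁻¹ᵀ = S⁻¹ := by rw [transpose_nonsing_inv, hSt]
  have hc1 : ∀ (p : ℕ) (X : Matrix (Fin m) (Fin p) ℝ), S * (S⁻¹ * X) = X := by
    intro p X; rw [← Matrix.mul_assoc, h1, Matrix.one_mul]
  have hc2 : ∀ (p : ℕ) (X : Matrix (Fin m) (Fin p) ℝ), S⁻¹ * (S * X) = X := by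
    intro p X; rw [← Matrix.mul_assoc, h2, Matrix.one_mul]
  simp only [transpose_sub, transpose_mul, transpose_one, transpose_transpose, hB, hSi,
    Matrix.mul_sub, Matrix.sub_mul, Matrix.mul_one, Matrix.one_mul, Matrix.mul_assoc,
    hc1, hc2]
  rw [hSdef]
  simp only [Matrix.mul_add, Matrix.add_mul, Matrix.mul_assoc]
  abel

/-- Infinite-horizon lower bound: if the deviation covariance recursion `Q^k`
(with constant gain `K`) converges to `Q∞` and the Riccati-type lower-bound
recursion `M_k` converges to `M∞`, then `Q∞ ⪰ M∞`, `Q∞` satisfies the Lyapunov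
fixed-point equation, and `M∞` satisfies the Riccati fixed-point equation. -/
theorem steady_state_deviation_lower_bound
    {n m : ℕ}
    (Sδ : Matrix (Fin m) (Fin m) ℝ) (hSδ : Sδ.PosDef)
    (A : Matrix (Fin n) (Fin n) ℝ) (C : Matrix (Fin m) (Fin n) ℝ)
    (K : Matrix (Fin n) (Fin m) ℝ)
    (Q M : ℕ → Matrix (Fin n) (Fin n) ℝ)
    (hQ0 : Q 0 = 0)
    (hQ : ∀ k, Q (k + 1)
      = (1 - K * C) * A * Q k * Aᵀ * (1 - K * C)ᵀ + K * Sδ * Kᵀ)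
    (hM0 : M 0 = 0) (hM1 : M 1 = Q 1)
    (hM : ∀ k, 2 ≤ k →
      M k = A * M (k - 1) * Aᵀ
        - A * M (k - 1) * Aᵀ * Cᵀ * (C * (A * M (k - 1) * Aᵀ) * Cᵀ + Sδ)⁻¹
          * C * (A * M (k - 1) * Aᵀ))
    (Qinf Minf : Matrix (Fin n) (Fin n) ℝ)
    (hQlim : Filter.Tendsto Q Filter.atTop (nhds Qinf))
    (hMlim : Filter.Tendsto M Filter.atTop (nhds Minf)) :
    (Qinf - Minf).PosSemidef ∧
    Qinf = (1 - K * C) * A * Qinf * Aᵀ * (1 - K * C)ᵀ + K * Sδ * Kᵀ ∧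
    Minf = A * Minf * Aᵀ
      - (A * Minf * Aᵀ) * Cᵀ * (C * (A * Minf * Aᵀ) * Cᵀ + Sδ)⁻¹
        * C * (A * Minf * Aᵀ) := by
  have hSδt : Sδᵀ = Sδ := psd_symm hSδ.posSemidef
  have hQ1 : Q 1 = K * Sδ * Kᵀ := by
    rw [hQ 0, hQ0]
    simp
  -- finite-horizon invariant
  have key : ∀ k, (M k).PosSemidef ∧ (Q k - M k).PosSemidef := by
    intro k
    induction k with
    | zero =>
      rw [hM0, hQ0, sub_zero]
      exact ⟨Matrix.PosSemidef.zero, Matrix.PosSemidef.zero⟩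
    | succ k ih =>
      cases k with
      | zero =>
        constructor
        · rw [hM1, hQ1]; exact psd_conj hSδ.posSemidef K
        · rw [hM1, sub_self]; exact Matrix.PosSemidef.zero
      | succ j =>
        obtain ⟨hMp, hDp⟩ := ih
        set B := A * M (j + 1) * Aᵀ with hBdef
        have hBp : B.PosSemidef := psd_conj hMp A
        have hBt : Bᵀ = B := psd_symm hBp
        have hSp : (C * B * Cᵀ + Sδ).PosDef :=
          Matrix.PosDef.posSemidef_add (psd_conj hBp C) hSδ
        have hU : IsUnit (C * B * Cᵀ + Sδ).det := hSp.det_pos.ne'.isUnit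
        have hMeq : M (j + 2) = B - B * Cᵀ * (C * B * Cᵀ + Sδ)⁻¹ * C * B := by
          have h := hM (j + 2) (by omega)
          rw [show j + 2 - 1 = j + 1 by omega] at h
          rw [h, hBdef]
        constructor
        · -- M (j+2) is PSD
          have hR := completing_square B C Sδ (B * Cᵀ * (C * B * Cᵀ + Sδ)⁻¹) hBt hSδt hU
          simp only [sub_self, Matrix.zero_mul, Matrix.mul_zero, add_zero] at hR
          rw [hMeq, ← hR]
          exact (psd_conj hBp _).add (psd_conj hSδ.posSemidef _)
        · -- Q (j+2) - M (j+2) is PSD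
          have hcs := completing_square B C Sδ K hBt hSδt hU
          have hQeq := hQ (j + 1)
          have hsplit : (1 - K * C) * A * Q (j + 1) * Aᵀ * (1 - K * C)ᵀ
              = (1 - K * C) * B * (1 - K * C)ᵀ
                + (1 - K * C) * (A * (Q (j + 1) - M (j + 1)) * Aᵀ) * (1 - K * C)ᵀ := by
            rw [hBdef]
            simp only [Matrix.mul_sub, Matrix.sub_mul, Matrix.mul_assoc]
            abel
          have hR2 : B - B * Cᵀ * (C * B * Cᵀ + Sδ)⁻¹ * C * B
              = ((1 - K * C) * B * (1 - K * C)ᵀ + K * Sδ * Kᵀ)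
                - (K - B * Cᵀ * (C * B * Cᵀ + Sδ)⁻¹) * (C * B * Cᵀ + Sδ)
                  * (K - B * Cᵀ * (C * B * Cᵀ + Sδ)⁻¹)ᵀ := by
            rw [hcs]; abel
          have hfin : Q (j + 2) - M (j + 2)
              = (K - B * Cᵀ * (C * B * Cᵀ + Sδ)⁻¹) * (C * B * Cᵀ + Sδ)
                  * (K - B * Cᵀ * (C * B * Cᵀ + Sδ)⁻¹)ᵀ
                + (1 - K * C) * (A * (Q (j + 1) - M (j + 1)) * Aᵀ) * (1 - K * C)ᵀ := by
            rw [hQeq, hsplit, hMeq, hR2]; abel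
          rw [hfin]
          exact (psd_conj hSp.posSemidef _).add (psd_conj (psd_conj hDp A) _)
  -- limits
  have hMpsd : Minf.PosSemidef := posSemidef_limit (fun k => (key k).1) hMlim
  refine ⟨posSemidef_limit (fun k => (key k).2) (hQlim.sub hMlim), ?_, ?_⟩
  · -- Lyapunov fixed point
    have t1 : Tendsto (fun k => Q (k + 1)) atTop (nhds Qinf) :=
      hQlim.comp (tendsto_add_atTop_nat 1)
    have t2 : Tendsto (fun k => Q (k + 1)) atTop
        (nhds ((1 - K * C) * A * Qinf * Aᵀ * (1 - K * C)ᵀ + K * Sδ * Kᵀ)) := by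
      simp only [hQ]
      exact (tendsto_matrix_mul (tendsto_matrix_mul (tendsto_matrix_mul
        (tendsto_const_nhds : Tendsto (fun _ : ℕ => (1 - K * C) * A) atTop _) hQlim)
        tendsto_const_nhds) tendsto_const_nhds).add tendsto_const_nhds
    exact tendsto_nhds_unique t1 t2
  · -- Riccati fixed point
    have hBinf : (A * Minf * Aᵀ).PosSemidef := psd_conj hMpsd A
    have hSinf : (C * (A * Minf * Aᵀ) * Cᵀ + Sδ).PosDef :=
      Matrix.PosDef.posSemidef_add (psd_conj hBinf C) hSδ
    have hdet : (C * (A * Minf * Aᵀ) * Cᵀ + Sδ).det ≠ 0 := hSinf.det_pos.ne'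
    have tM1 : Tendsto (fun k => M (k + 1)) atTop (nhds Minf) :=
      hMlim.comp (tendsto_add_atTop_nat 1)
    have tB : Tendsto (fun k => A * M (k + 1) * Aᵀ) atTop (nhds (A * Minf * Aᵀ)) :=
      tendsto_matrix_mul (tendsto_matrix_mul tendsto_const_nhds tM1) tendsto_const_nhds
    have tS : Tendsto (fun k => C * (A * M (k + 1) * Aᵀ) * Cᵀ + Sδ) atTop
        (nhds (C * (A * Minf * Aᵀ) * Cᵀ + Sδ)) :=
      (tendsto_matrix_mul (tendsto_matrix_mul tendsto_const_nhds tB)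
        tendsto_const_nhds).add tendsto_const_nhds
    have tSi : Tendsto (fun k => (C * (A * M (k + 1) * Aᵀ) * Cᵀ + Sδ)⁻¹) atTop
        (nhds ((C * (A * Minf * Aᵀ) * Cᵀ + Sδ)⁻¹)) :=
      ((contAt_inv' _ hdet).tendsto).comp tS
    have tRHS : Tendsto (fun k => A * M (k + 1) * Aᵀ
        - A * M (k + 1) * Aᵀ * Cᵀ * (C * (A * M (k + 1) * Aᵀ) * Cᵀ + Sδ)⁻¹
          * C * (A * M (k + 1) * Aᵀ)) atTop
        (nhds (A * Minf * Aᵀ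
          - (A * Minf * Aᵀ) * Cᵀ * (C * (A * Minf * Aᵀ) * Cᵀ + Sδ)⁻¹
            * C * (A * Minf * Aᵀ))) :=
      tB.sub (tendsto_matrix_mul (tendsto_matrix_mul (tendsto_matrix_mul
        (tendsto_matrix_mul tB tendsto_const_nhds) tSi) tendsto_const_nhds) tB)
    have tLHS : Tendsto (fun k => M (k + 2)) atTop (nhds Minf) :=
      hMlim.comp (tendsto_add_atTop_nat 2)
    have hfun : (fun k => M (k + 2)) = (fun k => A * M (k + 1) * Aᵀ
        - A * M (k + 1) * Aᵀ * Cᵀ * (C * (A * M (k + 1) * Aᵀ) * Cᵀ + Sδ)⁻¹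
          * C * (A * M (k + 1) * Aᵀ)) := by
      funext k
      have h := hM (k + 2) (by omega)
      rw [show k + 2 - 1 = k + 1 by omega] at h
      exact h
    rw [hfun] at tLHS
    exact tendsto_nhds_unique tLHS tRHS
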